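/- Fix positive integers d and m with m ≥ d. For a nonempty subset T of {a ∈ ℤ_{>0}^d : a_1 + ... + a_d = m}, let I(T) = {b ∈ ℤ_{>0}^d : b ≤ a componentwise for some a ∈ T}. Then |I(T)| ≥ (m/d)·|T|, with equality when T is the full level set {a ∈ ℤ_{>0}^d : a_1 + ... + a_d = m}. -/

import Mathlib

/-- The down-set `I(T) = {b ∈ ℤ_{>0}^d : b ≤ a componentwise for some a ∈ T}`,
with `ℤ_{>0}^d` modeled as functions `Fin d → ℕ` with all values positive. -/
def posDown (d : ℕ) (T : Set (Fin d → ℕ)) : Set (Fin d → ℕ) :=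
  {b | (∀ i, 0 < b i) ∧ ∃ a ∈ T, ∀ i, b i ≤ a i}

lemma sum_sub_one_eq {d s : ℕ} (a : Fin d → ℕ) (hpos : ∀ i, 0 < a i)
    (hsum : ∑ i, a i = s) : ∑ i, (a i - 1) = s - d := by
  have h1 : ∑ i, (a i - 1) + ∑ _i : Fin d, 1 = ∑ i, a i := by
    rw [← Finset.sum_add_distrib]
    exact Finset.sum_congr rfl fun i _ => by have := hpos i; omega
  simp only [Finset.sum_const, Finset.card_univ, Fintype.card_fin, smul_eq_mul, mul_one] at h1
  omega

lemma shadow_count {d s : ℕ} (S B : Finset (Fin d → ℕ))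
    (hS : ∀ a ∈ S, (∀ i, 0 < a i) ∧ ∑ i, a i = s)
    (hB : ∀ a ∈ S, ∀ i, 2 ≤ a i → Function.update a i (a i - 1) ∈ B)
    (hBsum : ∀ b ∈ B, ∑ i, b i = s - 1) :
    (s - d) * S.card ≤ (s - 1) * B.card := by
  classical
  set P := (S ×ˢ (Finset.univ : Finset (Fin d))).filter (fun p => 2 ≤ p.1 p.2) with hP
  set g : (Fin d → ℕ) × Fin d → (Fin d → ℕ) × Fin d :=
    fun p => (Function.update p.1 p.2 (p.1 p.2 - 1), p.2) with hg
  have hinj : Set.InjOn g P := by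
    rintro ⟨a, i⟩ h1 ⟨a', i'⟩ h2 heq
    simp only [hg, Prod.mk.injEq] at heq
    obtain ⟨hu, hi⟩ := heq
    subst hi
    simp only [hP, Finset.mem_coe, Finset.mem_filter] at h1 h2
    have h2a : 2 ≤ a i := h1.2
    have h2a' : 2 ≤ a' i := h2.2
    have : a = a' := by
      funext j
      by_cases hj : j = i
      · subst hj
        have h4 := congrFun hu j
        rw [Function.update_self, Function.update_self] at h4
        omega
      · have h5 := congrFun hu j
        rwa [Function.update_of_ne hj, Function.update_of_ne hj] at h5
    simp [this]
  have step2 : ∑ p ∈ (S ×ˢ (Finset.univ : Finset (Fin d))), (p.1 p.2 - 1)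
      = ∑ p ∈ P, (p.1 p.2 - 1) := by
    rw [hP]
    refine (Finset.sum_filter_of_ne ?_).symm
    intro p hp h
    omega
  have hsub : P.image g ⊆ B ×ˢ (Finset.univ : Finset (Fin d)) := by
    intro q hq
    simp only [Finset.mem_image] at hq
    obtain ⟨p, hp, rfl⟩ := hq
    simp only [hP, Finset.mem_filter, Finset.mem_product] at hp
    exact Finset.mem_product.2 ⟨hB p.1 hp.1.1 p.2 hp.2, Finset.mem_univ _⟩
  have step3 : ∑ p ∈ P, (p.1 p.2 - 1) = ∑ q ∈ P.image g, (q.1 q.2) := by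
    rw [Finset.sum_image (fun x hx y hy h => hinj hx hy h)]
    refine Finset.sum_congr rfl fun p hp => ?_
    simp [hg]
  have step4 : ∑ q ∈ P.image g, (q.1 q.2) ≤ ∑ q ∈ B ×ˢ (Finset.univ : Finset (Fin d)), (q.1 q.2) :=
    Finset.sum_le_sum_of_subset hsub
  have rhs : ∑ q ∈ B ×ˢ (Finset.univ : Finset (Fin d)), (q.1 q.2) = (s - 1) * B.card := by
    rw [Finset.sum_product]
    calc ∑ b ∈ B, ∑ i, b i = ∑ b ∈ B, (s-1) :=
          Finset.sum_congr rfl fun b hb => hBsum b hb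
      _ = (s-1) * B.card := by rw [Finset.sum_const, smul_eq_mul, mul_comm]
  have lhs : (s - d) * S.card = ∑ a ∈ S, ∑ i, (a i - 1) := by
    rw [Finset.sum_congr rfl fun a ha => sum_sub_one_eq a (hS a ha).1 (hS a ha).2,
      Finset.sum_const, smul_eq_mul, mul_comm]
  rw [lhs, ← Finset.sum_product', step2, step3, ← rhs]
  exact step4

lemma natCard_posLevel (d s : ℕ) (hd : 0 < d) (hds : d ≤ s) :
    Nat.card {a : Fin d → ℕ // (∀ i, 0 < a i) ∧ ∑ i, a i = s} = (s - 1).choose (d - 1) := by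
  have e1 : {a : Fin d → ℕ // (∀ i, 0 < a i) ∧ ∑ i, a i = s} ≃
      {P : Fin d → ℕ // ∑ i, P i = s - d} :=
  { toFun := fun a => ⟨fun i => a.1 i - 1, by
      show ∑ i, (a.1 i - 1) = s - d
      exact sum_sub_one_eq a.1 a.2.1 a.2.2⟩
    invFun := fun P => ⟨fun i => P.1 i + 1, by
      constructor
      · exact fun i => Nat.succ_pos _
      · show ∑ i, (P.1 i + 1) = s
        have h1 : ∑ i, (P.1 i + 1) = ∑ i, P.1 i + ∑ _i : Fin d, 1 := Finset.sum_add_distrib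
        have h2 := P.2
        simp only [Finset.sum_const, Finset.card_univ, Fintype.card_fin, smul_eq_mul,
          mul_one] at h1
        omega⟩
    left_inv := by
      rintro ⟨a, ha, -⟩
      exact Subtype.ext (funext fun i => by have := ha i; simp; omega)
    right_inv := by
      rintro ⟨P, hP⟩
      exact Subtype.ext (funext fun i => by simp) }
  rw [Nat.card_congr (e1.trans (Sym.equivNatSumOfFintype (Fin d) (s - d)).symm),
    Nat.card_eq_fintype_card, Sym.card_sym_eq_choose]
  have h3 : Fintype.card (Fin d) + (s - d) - 1 = s - 1 := by
    simp only [Fintype.card_fin]; omega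
  rw [h3]
  have h4 : s - d = (s - 1) - (d - 1) := by omega
  rw [h4, Nat.choose_symm (by omega)]

lemma hockey (d m : ℕ) (hd : 0 < d) (hm : d ≤ m) :
    ∑ s ∈ Finset.Icc d m, (s - 1).choose (d - 1) = m.choose d := by
  have h1 : ∑ s ∈ Finset.Icc d m, (s - 1).choose (d - 1)
      = ∑ j ∈ Finset.Icc (d - 1) (m - 1), j.choose (d - 1) := by
    refine Finset.sum_nbij' (fun s => s - 1) (fun j => j + 1) ?_ ?_ ?_ ?_ ?_
    · intro a ha
      simp only [Finset.mem_Icc] at ha ⊢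
      omega
    · intro a ha
      simp only [Finset.mem_Icc] at ha ⊢
      omega
    · intro a ha
      simp only [Finset.mem_Icc] at ha
      show a - 1 + 1 = a
      omega
    · intro a ha
      show a + 1 - 1 = a
      omega
    · intro a ha; rfl
  rw [h1, Nat.sum_Icc_choose]
  congr 1 <;> omega


lemma key_identity {d s : ℕ} (hd : 0 < d) (hds : d ≤ s) :
    (s + 1 - d) * s.choose (d - 1) = s * (s - 1).choose (d - 1) := by
  have h := Nat.choose_mul_succ_eq (s - 1) (d - 1)
  have hs : s - 1 + 1 = s := by omega
  rw [hs] at h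
  have h2 : s - (d - 1) = s + 1 - d := by omega
  rw [h2] at h
  calc (s + 1 - d) * s.choose (d - 1) = s.choose (d - 1) * (s + 1 - d) := mul_comm _ _
    _ = (s - 1).choose (d - 1) * s := h.symm
    _ = s * (s - 1).choose (d - 1) := mul_comm _ _

lemma key_identity2 {d m : ℕ} (hd : 0 < d) (hm : d ≤ m) :
    m * (m - 1).choose (d - 1) = m.choose d * d := by
  have h := Nat.add_one_mul_choose_eq (m - 1) (d - 1)
  have h1 : m - 1 + 1 = m := by omega
  have h2 : d - 1 + 1 = d := by omega
  rw [h1, h2] at h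
  exact h


/-- For a nonempty subset `T` of the level set `{a ∈ ℤ_{>0}^d : Σ a_i = m}`,
one has `|I(T)| ≥ (m/d)·|T|`, with equality when `T` is the whole level set. -/
theorem stmt8 (d m : ℕ) (hd : 0 < d) (hm : d ≤ m) (T : Set (Fin d → ℕ))
    (hne : T.Nonempty) (hT : ∀ a ∈ T, (∀ i, 0 < a i) ∧ ∑ i, a i = m) :
    ((m : ℚ) / d) * (T.ncard : ℚ) ≤ ((posDown d T).ncard : ℚ) ∧
    (T = {a : Fin d → ℕ | (∀ i, 0 < a i) ∧ ∑ i, a i = m} →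
      ((posDown d T).ncard : ℚ) = ((m : ℚ) / d) * (T.ncard : ℚ)) := by
  classical
  -- T is finite
  have hTsub' : T ⊆ ↑((Fintype.piFinset fun _ : Fin d => Finset.Icc 1 m).filter
      (fun a => ∑ i, a i = m)) := by
    intro a ha
    obtain ⟨hpos, hsum⟩ := hT a ha
    simp only [Finset.coe_filter, Set.mem_setOf_eq, Fintype.mem_piFinset, Finset.mem_Icc]
    refine ⟨fun i => ⟨hpos i, ?_⟩, hsum⟩
    calc a i ≤ ∑ j, a j := Finset.single_le_sum (fun j _ => Nat.zero_le _) (Finset.mem_univ i)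
      _ = m := hsum
  have hTfin : T.Finite := Set.Finite.subset (Finset.finite_toSet _) hTsub'
  set Tf := hTfin.toFinset with hTfdef
  have hmemTf : ∀ a, a ∈ Tf ↔ a ∈ T := fun a => hTfin.mem_toFinset
  have hTcard : T.ncard = Tf.card := Set.ncard_eq_toFinset_card T hTfin
  -- the down Finset
  set If := (Fintype.piFinset fun _ : Fin d => Finset.Icc 1 m).filter
      (fun b => ∃ a ∈ Tf, ∀ i, b i ≤ a i) with hIfdef
  have hmemIf : ∀ b, b ∈ If ↔ ((∀ i, 0 < b i) ∧ ∃ a ∈ T, ∀ i, b i ≤ a i) := by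
    intro b
    simp only [hIfdef, Finset.mem_filter, Fintype.mem_piFinset, Finset.mem_Icc]
    constructor
    · rintro ⟨h1, a, haT, hba⟩
      exact ⟨fun i => (h1 i).1, a, (hmemTf a).1 haT, hba⟩
    · rintro ⟨hpos, a, haT, hba⟩
      obtain ⟨hapos, hasum⟩ := hT a haT
      refine ⟨fun i => ⟨hpos i, ?_⟩, a, (hmemTf a).2 haT, hba⟩
      calc b i ≤ a i := hba i
        _ ≤ ∑ j, a j := Finset.single_le_sum (fun j _ => Nat.zero_le _) (Finset.mem_univ i)
        _ = m := hasum
  have hIfset : (posDown d T) = ↑If := by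
    ext b
    rw [Finset.mem_coe, hmemIf]
    rfl
  have hIcard : (posDown d T).ncard = If.card := by rw [hIfset, Set.ncard_coe_finset]
  -- levels
  set Ts : ℕ → Finset (Fin d → ℕ) := fun s => If.filter (fun b => ∑ i, b i = s) with hTsdef
  have hmemTs : ∀ s b, b ∈ Ts s ↔ (b ∈ If ∧ ∑ i, b i = s) := by
    intro s b
    simp only [hTsdef, Finset.mem_filter]
  have hlev : ∀ s, ∀ b ∈ Ts s, (∀ i, 0 < b i) ∧ ∑ i, b i = s := by
    intro s b hb
    rw [hmemTs] at hb
    exact ⟨((hmemIf b).1 hb.1).1, hb.2⟩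
  have hsum_range : ∀ b ∈ If, d ≤ ∑ i, b i ∧ ∑ i, b i ≤ m := by
    intro b hb
    obtain ⟨hpos, a, haT, hba⟩ := (hmemIf b).1 hb
    obtain ⟨hapos, hasum⟩ := hT a haT
    constructor
    · calc d = ∑ _i : Fin d, 1 := by simp
        _ ≤ ∑ i, b i := Finset.sum_le_sum (fun i _ => hpos i)
    · calc ∑ i, b i ≤ ∑ i, a i := Finset.sum_le_sum (fun i _ => hba i)
        _ = m := hasum
  -- shadow closure
  have hshadow : ∀ s, ∀ b ∈ Ts s, ∀ i, 2 ≤ b i →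
      Function.update b i (b i - 1) ∈ Ts (s - 1) := by
    intro s b hb i h2
    rw [hmemTs] at hb
    obtain ⟨hbIf, hbsum⟩ := hb
    obtain ⟨hpos, a, haT, hba⟩ := (hmemIf b).1 hbIf
    have hble : ∀ j, Function.update b i (b i - 1) j ≤ b j := by
      intro j
      by_cases hj : j = i
      · subst hj; rw [Function.update_self]; omega
      · rw [Function.update_of_ne hj]
    have hupos : ∀ j, 0 < Function.update b i (b i - 1) j := by
      intro j
      by_cases hj : j = i
      · subst hj; rw [Function.update_self]; omega
      · rw [Function.update_of_ne hj]; exact hpos j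
    have husum : ∑ j, Function.update b i (b i - 1) j = s - 1 := by
      rw [Finset.sum_update_of_mem (Finset.mem_univ i)]
      have hsplit : ∑ j, b j = b i + ∑ j ∈ Finset.univ \ {i}, b j := by
        conv_lhs => rw [← Function.update_eq_self i b]
        rw [Finset.sum_update_of_mem (Finset.mem_univ i)]
      omega
    rw [hmemTs]
    exact ⟨(hmemIf _).2 ⟨hupos, a, haT, fun j => le_trans (hble j) (hba j)⟩, husum⟩
  -- T sits at the top level
  have hTfsub : Tf ⊆ Ts m := by
    intro a haTf
    have haT := (hmemTf a).1 haTf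
    obtain ⟨hapos, hasum⟩ := hT a haT
    rw [hmemTs]
    exact ⟨(hmemIf a).2 ⟨hapos, a, haT, fun i => le_refl _⟩, hasum⟩
  -- main induction on levels
  have key : ∀ k, k ≤ m - d →
      (m - 1 - k).choose (d - 1) * Tf.card ≤ (m - 1).choose (d - 1) * (Ts (m - k)).card := by
    intro k
    induction k with
    | zero =>
      intro _
      simpa using mul_le_mul_right (Finset.card_le_card hTfsub) ((m - 1).choose (d - 1))
    | succ k ih =>
      intro hk
      have IH := ih (by omega)
      have hu : d + 1 ≤ m - k := by omega
      have h1 : m - (k + 1) = m - k - 1 := by omega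
      have h2 : m - 1 - (k + 1) = m - k - 1 - 1 := by omega
      have h3 : m - 1 - k = m - k - 1 := by omega
      rw [h1, h2]
      rw [h3] at IH
      set u := m - k with hudef
      have sc := shadow_count (Ts u) (Ts (u - 1)) (hlev u)
        (fun a ha i hi => by
          have := hshadow u a ha i hi
          exact this)
        (fun b hb => (hlev (u - 1) b hb).2)
      have ki := key_identity (s := u - 1) hd (by omega)
      have h4 : u - 1 + 1 - d = u - d := by omega
      rw [h4] at ki
      have c1 : (u - 1) * ((u - 1 - 1).choose (d - 1) * Tf.card)
          ≤ (u - 1) * ((m - 1).choose (d - 1) * (Ts (u - 1)).card) := by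
        calc (u - 1) * ((u - 1 - 1).choose (d - 1) * Tf.card)
            = ((u - 1) * (u - 1 - 1).choose (d - 1)) * Tf.card := by ring
          _ = ((u - d) * (u - 1).choose (d - 1)) * Tf.card := by rw [← ki]
          _ = (u - d) * ((u - 1).choose (d - 1) * Tf.card) := by ring
          _ ≤ (u - d) * ((m - 1).choose (d - 1) * (Ts u).card) := mul_le_mul_right IH _
          _ = (m - 1).choose (d - 1) * ((u - d) * (Ts u).card) := by ring
          _ ≤ (m - 1).choose (d - 1) * ((u - 1) * (Ts (u - 1)).card) := mul_le_mul_right sc _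
          _ = (u - 1) * ((m - 1).choose (d - 1) * (Ts (u - 1)).card) := by ring
      exact Nat.le_of_mul_le_mul_left c1 (by omega)
  -- per-level bound
  have perlevel : ∀ s ∈ Finset.Icc d m,
      (s - 1).choose (d - 1) * Tf.card ≤ (m - 1).choose (d - 1) * (Ts s).card := by
    intro s hs
    rw [Finset.mem_Icc] at hs
    have hk : m - s ≤ m - d := by omega
    have := key (m - s) hk
    have h2 : m - (m - s) = s := by omega
    have h3 : m - 1 - (m - s) = s - 1 := by omega
    rwa [h2, h3] at this
  -- partition of If by level
  have hpart : If.card = ∑ s ∈ Finset.Icc d m, (Ts s).card := by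
    refine Finset.card_eq_sum_card_fiberwise (fun b hb => ?_)
    rw [Finset.mem_coe, Finset.mem_Icc]
    exact hsum_range b hb
  have main : m.choose d * Tf.card ≤ (m - 1).choose (d - 1) * If.card := by
    calc m.choose d * Tf.card
        = (∑ s ∈ Finset.Icc d m, (s - 1).choose (d - 1)) * Tf.card := by
          rw [hockey d m hd hm]
      _ = ∑ s ∈ Finset.Icc d m, (s - 1).choose (d - 1) * Tf.card := Finset.sum_mul _ _ _
      _ ≤ ∑ s ∈ Finset.Icc d m, (m - 1).choose (d - 1) * (Ts s).card :=
          Finset.sum_le_sum perlevel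
      _ = (m - 1).choose (d - 1) * ∑ s ∈ Finset.Icc d m, (Ts s).card :=
          (Finset.mul_sum _ _ _).symm
      _ = (m - 1).choose (d - 1) * If.card := by rw [← hpart]
  have hchoosepos : 0 < (m - 1).choose (d - 1) :=
    Nat.choose_pos (Nat.sub_le_sub_right hm 1)
  have hid2 := key_identity2 (d := d) (m := m) hd hm
  have mainN : m * Tf.card ≤ d * If.card := by
    have c2 : (m - 1).choose (d - 1) * (m * Tf.card)
        ≤ (m - 1).choose (d - 1) * (d * If.card) := by
      calc (m - 1).choose (d - 1) * (m * Tf.card)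
          = (m * (m - 1).choose (d - 1)) * Tf.card := by ring
        _ = (m.choose d * d) * Tf.card := by rw [hid2]
        _ = d * (m.choose d * Tf.card) := by ring
        _ ≤ d * ((m - 1).choose (d - 1) * If.card) := mul_le_mul_right main _
        _ = (m - 1).choose (d - 1) * (d * If.card) := by ring
    exact Nat.le_of_mul_le_mul_left c2 hchoosepos
  have hdQ : (0 : ℚ) < (d : ℚ) := by exact_mod_cast hd
  constructor
  · rw [hIcard, hTcard, div_mul_eq_mul_div, div_le_iff₀ hdQ]
    calc ((m : ℚ) * (Tf.card : ℚ)) = ((m * Tf.card : ℕ) : ℚ) := by push_cast; ring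
      _ ≤ ((d * If.card : ℕ) : ℚ) := by exact_mod_cast mainN
      _ = (If.card : ℚ) * (d : ℚ) := by push_cast; ring
  · intro hTeq
    have hTfull : ∀ a : Fin d → ℕ, a ∈ T ↔ ((∀ i, 0 < a i) ∧ ∑ i, a i = m) := by
      intro a
      rw [hTeq]
      rfl
    have hTfcard : Tf.card = (m - 1).choose (d - 1) := by
      rw [← hTcard, ← Nat.card_coe_set_eq, hTeq]
      exact natCard_posLevel d m hd hm
    have hTsfull : ∀ s ∈ Finset.Icc d m,
        ((Ts s : Finset (Fin d → ℕ)) : Set (Fin d → ℕ))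
          = {b : Fin d → ℕ | (∀ i, 0 < b i) ∧ ∑ i, b i = s} := by
      intro s hs
      rw [Finset.mem_Icc] at hs
      ext b
      simp only [Finset.mem_coe, Set.mem_setOf_eq]
      constructor
      · intro hb
        exact hlev s b hb
      · rintro ⟨hpos, hsum⟩
        have i0 : Fin d := ⟨0, hd⟩
        set a := Function.update b i0 (b i0 + (m - s)) with hadef
        have hale : ∀ j, b j ≤ a j := by
          intro j
          by_cases hj : j = i0
          · subst hj; rw [hadef, Function.update_self]; omega
          · rw [hadef, Function.update_of_ne hj]
        have hapos : ∀ j, 0 < a j := fun j => lt_of_lt_of_le (hpos j) (hale j)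
        have hasum : ∑ j, a j = m := by
          rw [hadef, Finset.sum_update_of_mem (Finset.mem_univ i0)]
          have hsplit : ∑ j, b j = b i0 + ∑ j ∈ Finset.univ \ {i0}, b j := by
            conv_lhs => rw [← Function.update_eq_self i0 b]
            rw [Finset.sum_update_of_mem (Finset.mem_univ i0)]
          omega
        have haT : a ∈ T := (hTfull a).2 ⟨hapos, hasum⟩
        rw [hmemTs]
        exact ⟨(hmemIf b).2 ⟨hpos, a, haT, hale⟩, hsum⟩
    have hTscard : ∀ s ∈ Finset.Icc d m, (Ts s).card = (s - 1).choose (d - 1) := by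
      intro s hs
      have h1 : (Ts s).card = ((Ts s : Finset (Fin d → ℕ)) : Set (Fin d → ℕ)).ncard :=
        (Set.ncard_coe_finset _).symm
      rw [h1, hTsfull s hs, ← Nat.card_coe_set_eq]
      exact natCard_posLevel d s hd (Finset.mem_Icc.1 hs).1
    have hIfcard : If.card = m.choose d := by
      rw [hpart, Finset.sum_congr rfl hTscard, hockey d m hd hm]
    rw [hIcard, hTcard, hIfcard, hTfcard]
    rw [div_mul_eq_mul_div, eq_div_iff (ne_of_gt hdQ)]
    calc ((m.choose d : ℕ) : ℚ) * (d : ℚ) = ((m.choose d * d : ℕ) : ℚ) := by push_cast; ring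
      _ = ((m * (m - 1).choose (d - 1) : ℕ) : ℚ) := by rw [hid2]
      _ = (m : ℚ) * (((m - 1).choose (d - 1) : ℕ) : ℚ) := by push_cast; ring
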